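/- Let P be a class of groups closed under subgroups, under quotients (images of surjective homomorphisms), and under binary direct products. Let G be a group in P, H a subgroup of G, and N a normal subgroup of G with N ⊆ H. Then the dominion of H/N in G/N in the class P equals the image of dom_G^P(H) under the canonical projection G → G/N; that is, dom_{G/N}^P(H/N) = dom_G^P(H)/N. -/

import Mathlib

universe u v

/-- The dominion of a subgroup `H` of `G` in the class of groups `P`. -/
def dominion {G : Type v} [Group G] (P : (K : Type u) → [Group K] → Prop)
    (H : Subgroup G) : Set G :=
  {a : G | ∀ (K : Type u) [Group K], P K → ∀ f g : G →* K,
    (∀ h ∈ H, f h = g h) → f a = g a}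

/-- If the class `P` is closed under subgroups, quotients and binary direct
products, `G ∈ P`, `H` is a subgroup of `G`, and `N` is a normal subgroup of
`G` contained in `H`, then the dominion of `H/N` in `G/N` is the image of the
dominion of `H` in `G` under the canonical projection `G → G/N`. -/
theorem dominion_quotient {G : Type u} [Group G]
    (P : (K : Type u) → [Group K] → Prop)
    (hsub : ∀ (A : Type u) [Group A] (B : Subgroup A), P A → P B)
    (hquot : ∀ (A B : Type u) [Group A] [Group B] (φ : A →* B),
      Function.Surjective φ → P A → P B)
    (hprod : ∀ (A B : Type u) [Group A] [Group B], P A → P B → P (A × B))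
    (hG : P G) (H : Subgroup G) (N : Subgroup G) [N.Normal] (hNH : N ≤ H) :
    dominion P (H.map (QuotientGroup.mk' N)) =
      (QuotientGroup.mk' N) '' (dominion P H) := by
  apply Set.eq_of_subset_of_subset
  · intro x hx
    obtain ⟨a, rfl⟩ := QuotientGroup.mk'_surjective N x
    refine ⟨a, ?_, rfl⟩
    intro K _ hK f g hfg
    have hfgN : ∀ n ∈ N, f n = g n := fun n hn => hfg n (hNH hn)
    set F : G →* K × K := f.prod g with hFdef
    set D : G →* K × K := f.prod f with hDdef
    set S : Subgroup (K × K) := F.range ⊔ D.range with hSdef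
    set M : Subgroup (K × K) := N.map F with hMdef
    have hFS : ∀ y : G, F y ∈ S := fun y => Subgroup.mem_sup_left ⟨y, rfl⟩
    have hDS : ∀ y : G, D y ∈ S := fun y => Subgroup.mem_sup_right ⟨y, rfl⟩
    have hMS : M ≤ S := by
      rintro m ⟨n, hn, rfl⟩; exact hFS n
    have hconjF : ∀ y : G, ∀ m ∈ M, F y * m * (F y)⁻¹ ∈ M := by
      rintro y m ⟨n, hn, rfl⟩
      exact ⟨y * n * y⁻¹, Subgroup.Normal.conj_mem ‹N.Normal› n hn y,
        by simp [map_mul, map_inv]⟩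
    have hconjD : ∀ y : G, ∀ m ∈ M, D y * m * (D y)⁻¹ ∈ M := by
      rintro y m ⟨n, hn, rfl⟩
      refine ⟨y * n * y⁻¹, Subgroup.Normal.conj_mem ‹N.Normal› n hn y, ?_⟩
      have h1 : f n = g n := hfgN n hn
      have h2 : f (y * n * y⁻¹) = g (y * n * y⁻¹) :=
        hfgN _ (Subgroup.Normal.conj_mem ‹N.Normal› n hn y)
      show (f (y * n * y⁻¹), g (y * n * y⁻¹)) = (f y, f y) * (f n, g n) * (f y, f y)⁻¹
      rw [← h2, ← h1]
      simp [Prod.ext_iff, map_mul, map_inv]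
    have hconjS : ∀ s ∈ S, ∀ m ∈ M, s * m * s⁻¹ ∈ M := by
      have key : ∀ s : K × K, (∀ m ∈ M, s * m * s⁻¹ ∈ M) →
          (∀ m ∈ M, s⁻¹ * m * s ∈ M) → s ∈ Subgroup.normalizer (M : Set (K × K)) := by
        intro s h1 h2
        rw [Subgroup.mem_normalizer_iff]
        intro h
        constructor
        · exact h1 h
        · intro hh
          have e : s⁻¹ * (s * h * s⁻¹) * s = h := by group
          have := h2 _ hh
          rwa [e] at this
      have hle : S ≤ Subgroup.normalizer (M : Set (K × K)) := by
        apply sup_le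
        · rintro _ ⟨y, rfl⟩
          refine key _ (hconjF y) ?_
          intro m hm
          have := hconjF y⁻¹ m hm
          simpa [map_inv] using this
        · rintro _ ⟨y, rfl⟩
          refine key _ (hconjD y) ?_
          intro m hm
          have := hconjD y⁻¹ m hm
          simpa [map_inv] using this
      intro s hs m hm
      exact (Subgroup.mem_normalizer_iff.mp (hle hs) m).mp hm
    haveI hnorm : ((M.subgroupOf S)).Normal :=
      (Subgroup.normal_subgroupOf_iff hMS).mpr fun h k hh hk => hconjS k hk h hh
    set M' : Subgroup S := M.subgroupOf S with hM'def
    set p : S →* S ⧸ M' := QuotientGroup.mk' M' with hpdef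
    have hPQ : P (S ⧸ M') :=
      hquot S (S ⧸ M') p (QuotientGroup.mk'_surjective M')
        (hsub (K × K) S (hprod K K hK hK))
    set FS : G →* S := F.codRestrict S hFS with hFSdef
    set DS : G →* S := D.codRestrict S hDS with hDSdef
    have hkerF : N ≤ (p.comp FS).ker := by
      intro n hn
      rw [MonoidHom.mem_ker, MonoidHom.comp_apply, hpdef, QuotientGroup.mk'_apply,
        QuotientGroup.eq_one_iff]
      exact Subgroup.mem_subgroupOf.mpr ⟨n, hn, rfl⟩
    have hkerD : N ≤ (p.comp DS).ker := by
      intro n hn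
      rw [MonoidHom.mem_ker, MonoidHom.comp_apply, hpdef, QuotientGroup.mk'_apply,
        QuotientGroup.eq_one_iff]
      refine Subgroup.mem_subgroupOf.mpr ⟨n, hn, ?_⟩
      have : f n = g n := hfgN n hn
      show F n = D n
      simp [hFdef, hDdef, Prod.ext_iff, this]
    set α : G ⧸ N →* S ⧸ M' := QuotientGroup.lift N (p.comp FS) hkerF with hαdef
    set β : G ⧸ N →* S ⧸ M' := QuotientGroup.lift N (p.comp DS) hkerD with hβdef
    have hagree : ∀ h ∈ H.map (QuotientGroup.mk' N), α h = β h := by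
      rintro _ ⟨h0, hh0, rfl⟩
      have : FS h0 = DS h0 := by
        apply Subtype.ext
        show F h0 = D h0
        simp [hFdef, hDdef, Prod.ext_iff, hfg h0 hh0]
      simp [hαdef, hβdef, QuotientGroup.mk'_apply, QuotientGroup.lift_mk', this]
    have := hx (S ⧸ M') hPQ α β hagree
    have heq : p (FS a) = p (DS a) := by
      simpa [hαdef, hβdef, QuotientGroup.mk'_apply, QuotientGroup.lift_mk'] using this
    rw [hpdef, QuotientGroup.mk'_eq_mk'] at heq
    obtain ⟨z, hz, hza⟩ := heq
    obtain ⟨n, hn, hnz⟩ := Subgroup.mem_subgroupOf.mp hz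
    have hcoe : (F a : K × K) * F n = D a := by
      have := congrArg (Subtype.val) hza
      rw [hnz]; exact this
    rw [Prod.ext_iff] at hcoe
    have h1 : f a * f n = f a := hcoe.1
    have h2 : g a * g n = f a := hcoe.2
    have hfn : f n = 1 := mul_eq_left.mp h1
    have hgn : g n = 1 := by rw [← hfgN n hn]; exact hfn
    rw [hgn, mul_one] at h2
    exact h2.symm
  · rintro _ ⟨a, ha, rfl⟩
    intro K _ hK f g hfg
    exact ha K hK (f.comp (QuotientGroup.mk' N)) (g.comp (QuotientGroup.mk' N))
      (fun h hh => hfg _ ⟨h, hh, rfl⟩)
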